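/- Let μ be continuous on [0,1] with μ(α) ∼ a α^λ as α → 0⁺ for some constants a > 0 and λ > 0 (i.e. μ(α)/(a α^λ) → 1). Then K(p) ∼ a Γ(1+λ) p^{−1} (log(1/p))^{−1−λ} as p → 0 within ℂ ∖ (−∞,0]; more precisely, p · (−Log p)^{1+λ} · K(p) → a Γ(1+λ) as p → 0, p ∈ ℂ ∖ (−∞,0], where Log is the principal branch of the logarithm and (−Log p)^{1+λ} is the principal power, which is well-defined since Re(−Log p) → +∞. -/

import Mathlib

open MeasureTheory Filter Set

/-- `K(p) = ∫₀¹ p^{α-1} μ(α) dα`, with `p^{α-1} = exp((α-1) Log p)` using the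
principal branch of the logarithm. -/
noncomputable def Kfun (μ : ℝ → ℝ) (p : ℂ) : ℂ :=
  ∫ α in (0:ℝ)..1, Complex.exp (((α : ℂ) - 1) * Complex.log p) * (μ α : ℂ)

namespace KfunAux


lemma tendsto_sfun : Tendsto (fun p : ℂ => (-Complex.log p).re)
    (nhdsWithin 0 Complex.slitPlane) atTop := by
  have h1 : Tendsto (fun p : ℂ => ‖p‖) (nhdsWithin 0 Complex.slitPlane)
      (nhdsWithin 0 (Ioi 0)) := by
    apply tendsto_nhdsWithin_of_tendsto_nhds_of_eventually_within
    · simpa using (continuous_norm.tendsto (0:ℂ)).mono_left nhdsWithin_le_nhds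
    · filter_upwards [self_mem_nhdsWithin] with p hp
      exact norm_pos_iff.mpr (Complex.slitPlane_ne_zero hp)
  have h2 := Real.tendsto_log_nhdsGT_zero.comp h1
  have h3 : Tendsto (fun p : ℂ => -Real.log ‖p‖)
      (nhdsWithin 0 Complex.slitPlane) atTop := tendsto_neg_atTop_iff.mpr h2
  refine h3.congr fun p => ?_
  simp [Complex.neg_re, Complex.log_re]

lemma tendsto_Ldiv : Tendsto (fun p : ℂ => (-Complex.log p) / ((-Complex.log p).re : ℂ))
    (nhdsWithin 0 Complex.slitPlane) (nhds 1) := by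
  have hs := tendsto_sfun
  have hspos : ∀ᶠ p : ℂ in nhdsWithin 0 Complex.slitPlane, 0 < (-Complex.log p).re :=
    hs.eventually_gt_atTop 0
  have hre : Tendsto (fun p : ℂ => ((-Complex.log p) / ((-Complex.log p).re : ℂ)).re)
      (nhdsWithin 0 Complex.slitPlane) (nhds 1) := by
    apply tendsto_const_nhds.congr'
    filter_upwards [hspos] with p hp
    rw [Complex.div_ofReal_re, div_self hp.ne']
  have him : Tendsto (fun p : ℂ => ((-Complex.log p) / ((-Complex.log p).re : ℂ)).im)
      (nhdsWithin 0 Complex.slitPlane) (nhds 0) := by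
    apply squeeze_zero_norm' (a := fun p : ℂ => Real.pi * ((-Complex.log p).re)⁻¹)
    · filter_upwards [hspos] with p hp
      rw [Complex.div_ofReal_im]
      rw [Real.norm_eq_abs, abs_div, abs_of_pos hp, div_eq_mul_inv]
      gcongr
      simp only [Complex.neg_im, abs_neg, Complex.log_im]
      exact Complex.abs_arg_le_pi p
    · simpa using (hs.inv_tendsto_atTop.const_mul Real.pi)
  have key : Tendsto (fun p : ℂ =>
      (((((-Complex.log p) / ((-Complex.log p).re : ℂ)).re : ℝ) : ℂ)
        + (((((-Complex.log p) / ((-Complex.log p).re : ℂ)).im : ℝ) : ℂ)) * Complex.I))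
      (nhdsWithin 0 Complex.slitPlane) (nhds (((1:ℝ):ℂ) + ((0:ℝ):ℂ) * Complex.I)) := by
    exact ((Complex.continuous_ofReal.tendsto 1).comp hre).add
      ((((Complex.continuous_ofReal.tendsto 0).comp him)).mul_const Complex.I)
  simp only [Complex.ofReal_one, Complex.ofReal_zero, zero_mul, add_zero] at key
  refine key.congr fun p => Complex.re_add_im _

lemma mu_bound (μ : ℝ → ℝ) (hc : ContinuousOn μ (Set.Icc 0 1))
    (a lam : ℝ) (ha : 0 < a) (hlam : 0 < lam)
    (hasymp : Tendsto (fun α : ℝ => μ α / (a * α ^ lam))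
      (nhdsWithin 0 (Set.Ioi 0)) (nhds 1)) :
    ∃ C : ℝ, 0 < C ∧ ∀ α ∈ Ioc (0:ℝ) 1, |μ α| ≤ C * (a * α ^ lam) := by
  have h2 : ∀ᶠ α in nhdsWithin 0 (Set.Ioi 0), |μ α / (a * α ^ lam)| < 2 := by
    have := hasymp.eventually (eventually_abs_sub_lt 1 one_pos)
    filter_upwards [this] with α hα
    calc |μ α / (a * α ^ lam)| ≤ |μ α / (a * α ^ lam) - 1| + |1| := by
          simpa using abs_add_le (μ α / (a * α ^ lam) - 1) 1
      _ < 2 := by rw [abs_one]; linarith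
  rw [eventually_nhdsWithin_iff, Metric.eventually_nhds_iff] at h2
  obtain ⟨δ, hδ, hδ2⟩ := h2
  set d := min δ 1 / 2 with hd
  have hdpos : 0 < d := by positivity
  have hd1 : d ≤ 1 := by
    have : min δ 1 ≤ 1 := min_le_right _ _
    simp only [hd]; linarith
  have hcomp : ∃ M : ℝ, ∀ α ∈ Icc d 1, |μ α| ≤ M := by
    obtain ⟨M, hM⟩ := (isCompact_Icc.image_of_continuousOn
      (hc.mono (fun x hx => ⟨le_trans hdpos.le hx.1, hx.2⟩))).isBounded.subset_closedBall 0
    exact ⟨M, fun α hα => by simpa using hM ⟨α, hα, rfl⟩⟩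
  obtain ⟨M, hM⟩ := hcomp
  set C := max 2 (max M 1 / (a * d ^ lam)) with hC
  have hdlam : 0 < a * d ^ lam := by
    have := Real.rpow_pos_of_pos hdpos lam; positivity
  refine ⟨C, lt_of_lt_of_le two_pos (le_max_left _ _), fun α hα => ?_⟩
  have hpos : 0 < a * α ^ lam := by
    have := Real.rpow_pos_of_pos hα.1 lam; positivity
  rcases le_or_gt α d with h | h
  · have hαδ : dist α 0 < δ := by
      rw [Real.dist_eq, sub_zero, abs_of_pos hα.1]
      have : min δ 1 ≤ δ := min_le_left _ _
      have : d < δ := by simp only [hd]; linarith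
      linarith
    have hratio := hδ2 hαδ hα.1
    rw [abs_div, abs_of_pos hpos, div_lt_iff₀ hpos] at hratio
    calc |μ α| ≤ 2 * (a * α ^ lam) := hratio.le
      _ ≤ C * (a * α ^ lam) := by
          apply mul_le_mul_of_nonneg_right (le_max_left _ _) hpos.le
  · have h1 : |μ α| ≤ M := hM α ⟨h.le, hα.2⟩
    have h3 : a * d ^ lam ≤ a * α ^ lam := by
      apply mul_le_mul_of_nonneg_left _ ha.le
      exact Real.rpow_le_rpow hdpos.le h.le hlam.le
    calc |μ α| ≤ M := h1
      _ ≤ max M 1 := le_max_left _ _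
      _ = max M 1 / (a * d ^ lam) * (a * d ^ lam) := by field_simp
      _ ≤ max M 1 / (a * d ^ lam) * (a * α ^ lam) := by
          apply mul_le_mul_of_nonneg_left h3 (by positivity)
      _ ≤ C * (a * α ^ lam) := by
          apply mul_le_mul_of_nonneg_right (le_max_right _ _) hpos.le


lemma key_identity (μ : ℝ → ℝ) (lam : ℝ) (p : ℂ) (hp : p ∈ Complex.slitPlane)
    (hs : 0 < (-Complex.log p).re) :
    p * (-Complex.log p) ^ ((1 + lam : ℝ) : ℂ) * Kfun μ p
      = ((-Complex.log p) / (((-Complex.log p).re : ℝ) : ℂ)) ^ ((1 + lam : ℝ) : ℂ) *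
        ∫ t in Ioi (0:ℝ), (Ioc (0:ℝ) ((-Complex.log p).re)).indicator
          (fun t => Complex.exp (-((t : ℂ) * ((-Complex.log p) / (((-Complex.log p).re : ℝ) : ℂ)))) *
            ((((-Complex.log p).re ^ lam * μ (t / (-Complex.log p).re) : ℝ)) : ℂ)) t := by
  set L : ℂ := -Complex.log p with hLdef
  set s : ℝ := L.re with hsdef
  have hp0 : p ≠ 0 := Complex.slitPlane_ne_zero hp
  have hL : L ≠ 0 := fun h0 => absurd hs (by simp [hsdef, h0])
  have hsC : ((s : ℝ) : ℂ) ≠ 0 := by exact_mod_cast hs.ne'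
  have hLs : L / (s : ℂ) ≠ 0 := div_ne_zero hL hsC
  set h : ℝ → ℂ := fun α => Complex.exp (-((α : ℂ) * L)) * (μ α : ℂ) with hhdef
  -- step 1 : p * Kfun = ∫₀¹ h
  have step1 : p * Kfun μ p = ∫ α in (0:ℝ)..1, h α := by
    rw [Kfun, ← intervalIntegral.integral_const_mul]
    refine intervalIntegral.integral_congr fun α _ => ?_
    rw [← mul_assoc]
    congr 1
    have harg : -((α : ℂ) * L) = Complex.log p + ((α : ℂ) - 1) * Complex.log p := by
      rw [hLdef]; ring
    rw [harg, Complex.exp_add, Complex.exp_log hp0]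
  -- step 2 : substitution
  have step2 : ∫ t in (0:ℝ)..s, h (t / s) = (s : ℂ) * ∫ α in (0:ℝ)..1, h α := by
    rw [intervalIntegral.integral_comp_div h hs.ne']
    rw [zero_div, div_self hs.ne']
    rw [← Complex.real_smul]
  -- step 3 : interval integral as integral over Ioi with indicator
  have step3 : ∫ t in Ioi (0:ℝ), (Ioc (0:ℝ) s).indicator (fun t => h (t / s)) t
      = ∫ t in (0:ℝ)..s, h (t / s) := by
    rw [intervalIntegral.integral_of_le hs.le]
    rw [integral_indicator measurableSet_Ioc, Measure.restrict_restrict measurableSet_Ioc,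
      inter_eq_left.mpr Ioc_subset_Ioi_self]
  -- step 4 : the integrand is s^lam * h (t/s)
  have step4 : ∫ t in Ioi (0:ℝ), (Ioc (0:ℝ) s).indicator
      (fun t => Complex.exp (-((t : ℂ) * (L / (s : ℂ)))) * (((s ^ lam * μ (t / s) : ℝ)) : ℂ)) t
      = ((s ^ lam : ℝ) : ℂ) * ∫ t in Ioi (0:ℝ), (Ioc (0:ℝ) s).indicator (fun t => h (t / s)) t := by
    rw [← integral_const_mul]
    refine integral_congr_ae (Eventually.of_forall fun t => ?_)
    by_cases ht : t ∈ Ioc (0:ℝ) s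
    · simp only [Set.indicator_of_mem ht, hhdef]
      push_cast
      have harg2 : (t : ℂ) * (L / (s : ℂ)) = (t : ℂ) / (s : ℂ) * L := by ring
      rw [harg2]
      ring
    · simp [Set.indicator_of_notMem ht]
  -- step 5 : cpow splitting
  have step5 : L ^ ((1 + lam : ℝ) : ℂ)
      = ((s ^ (1 + lam) : ℝ) : ℂ) * (L / (s : ℂ)) ^ ((1 + lam : ℝ) : ℂ) := by
    have hLfact : L = (s : ℂ) * (L / (s : ℂ)) := by field_simp
    rw [Complex.ofReal_cpow hs.le]
    rw [Complex.cpow_def_of_ne_zero hL, Complex.cpow_def_of_ne_zero hLs,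
      Complex.cpow_def_of_ne_zero hsC, ← Complex.exp_add, ← add_mul]
    congr 2
    conv_lhs => rw [hLfact]
    rw [Complex.log_ofReal_mul hs hLs, Complex.ofReal_log hs.le]
  -- assemble
  rw [step4, step3, step2]
  have : p * L ^ ((1 + lam : ℝ) : ℂ) * Kfun μ p
      = L ^ ((1 + lam : ℝ) : ℂ) * (p * Kfun μ p) := by ring
  rw [this, step1, step5]
  have hrs : ((s ^ (1 + lam) : ℝ) : ℂ) = ((s ^ lam : ℝ) : ℂ) * (s : ℂ) := by
    rw [← Complex.ofReal_mul]
    norm_cast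
    rw [add_comm, Real.rpow_add_one hs.ne']
  rw [hrs]
  ring

lemma DCT_lemma (μ : ℝ → ℝ)
    (hc : ContinuousOn μ (Set.Icc 0 1))
    (a lam : ℝ) (ha : 0 < a) (hlam : 0 < lam)
    (hasymp : Tendsto (fun α : ℝ => μ α / (a * α ^ lam))
      (nhdsWithin 0 (Set.Ioi 0)) (nhds 1))
    (C : ℝ) (hC : 0 < C) (hCb : ∀ α ∈ Ioc (0:ℝ) 1, |μ α| ≤ C * (a * α ^ lam))
    (tendsto_sfun : Tendsto (fun p : ℂ => (-Complex.log p).re)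
      (nhdsWithin 0 Complex.slitPlane) atTop)
    (tendsto_Ldiv : Tendsto (fun p : ℂ => (-Complex.log p) / ((-Complex.log p).re : ℂ))
      (nhdsWithin 0 Complex.slitPlane) (nhds 1)) :
    Tendsto (fun p : ℂ => ∫ t in Ioi (0:ℝ), (Ioc (0:ℝ) ((-Complex.log p).re)).indicator
          (fun t => Complex.exp (-((t : ℂ) * ((-Complex.log p) / (((-Complex.log p).re : ℝ) : ℂ)))) *
            ((((-Complex.log p).re ^ lam * μ (t / (-Complex.log p).re) : ℝ)) : ℂ)) t)
      (nhdsWithin 0 Complex.slitPlane)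
      (nhds ((a * Real.Gamma (1 + lam) : ℝ) : ℂ)) := by
  set l := nhdsWithin (0:ℂ) Complex.slitPlane with hl
  set S : ℂ → ℝ := fun p => (-Complex.log p).re with hS
  set W : ℂ → ℂ := fun p => (-Complex.log p) / ((S p : ℝ) : ℂ) with hW
  have hspos : ∀ᶠ p : ℂ in l, 0 < S p := tendsto_sfun.eventually_gt_atTop 0
  have hfinal : (∫ t in Ioi (0:ℝ), ((a * t ^ lam * Real.exp (-t) : ℝ) : ℂ))
      = ((a * Real.Gamma (1 + lam) : ℝ) : ℂ) := by
    have h0 : (∫ t in Ioi (0:ℝ), ((a * t ^ lam * Real.exp (-t) : ℝ) : ℂ))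
        = (((∫ t in Ioi (0:ℝ), a * t ^ lam * Real.exp (-t)) : ℝ) : ℂ) := integral_ofReal
    rw [h0]
    congr 1
    rw [Real.Gamma_eq_integral (by linarith : (0:ℝ) < 1 + lam), ← integral_const_mul]
    refine integral_congr_ae (Eventually.of_forall fun t => ?_)
    rw [add_sub_cancel_left]
    ring
  rw [← hfinal]
  apply tendsto_integral_filter_of_dominated_convergence
    (bound := fun t => C * (a * t ^ lam) * Real.exp (-t))
  · -- measurability
    filter_upwards [hspos] with p hp
    rw [aestronglyMeasurable_indicator_iff measurableSet_Ioc,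
      Measure.restrict_restrict measurableSet_Ioc, inter_eq_left.mpr Ioc_subset_Ioi_self]
    apply ContinuousOn.aestronglyMeasurable _ measurableSet_Ioc
    apply ContinuousOn.mul
    · exact (Complex.continuous_exp.comp
        ((Complex.continuous_ofReal.mul continuous_const).neg)).continuousOn
    · apply Complex.continuous_ofReal.comp_continuousOn
      apply ContinuousOn.mul continuousOn_const
      apply hc.comp ((continuous_id.div_const (S p)).continuousOn)
      intro t ht
      exact ⟨(div_pos ht.1 hp).le, (div_le_one hp).mpr ht.2⟩
  · -- bound
    filter_upwards [hspos] with p hp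
    rw [ae_restrict_iff' measurableSet_Ioi]
    refine Eventually.of_forall fun t ht => ?_
    by_cases htm : t ∈ Ioc (0:ℝ) (S p)
    · rw [Set.indicator_of_mem htm]
      rw [norm_mul, Complex.norm_exp,
        Complex.norm_real, Real.norm_eq_abs]
      have hre : (-((t : ℂ) * W p)).re = -t := by
        have : (W p).re = 1 := by
          rw [hW]; simp only [hS]
          rw [Complex.div_ofReal_re, div_self hp.ne']
        simp [Complex.mul_re, this]
      rw [hre]
      have hmu : |S p ^ lam * μ (t / S p)| ≤ C * (a * t ^ lam) := by
        rw [abs_mul, abs_of_pos (Real.rpow_pos_of_pos hp lam)]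
        have h1 : t / S p ∈ Ioc (0:ℝ) 1 :=
          ⟨div_pos htm.1 hp, (div_le_one hp).mpr htm.2⟩
        calc S p ^ lam * |μ (t / S p)| ≤ S p ^ lam * (C * (a * (t / S p) ^ lam)) := by
              apply mul_le_mul_of_nonneg_left (hCb _ h1) (Real.rpow_pos_of_pos hp lam).le
          _ = C * (a * t ^ lam) := by
              rw [Real.div_rpow htm.1.le hp.le]
              field_simp
      calc Real.exp (-t) * |S p ^ lam * μ (t / S p)|
          ≤ Real.exp (-t) * (C * (a * t ^ lam)) :=
            mul_le_mul_of_nonneg_left hmu (Real.exp_pos _).le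
        _ = C * (a * t ^ lam) * Real.exp (-t) := by ring
    · rw [Set.indicator_of_notMem htm]
      simp only [norm_zero]
      have : (0:ℝ) < t := ht
      positivity
  · -- integrability of the bound
    have hint := Real.GammaIntegral_convergent (by linarith : (0:ℝ) < 1 + lam)
    have := hint.const_mul (C * a)
    apply this.congr
    refine Eventually.of_forall fun t => ?_
    rw [add_sub_cancel_left]
    ring
  · -- pointwise limit
    rw [ae_restrict_iff' measurableSet_Ioi]
    refine Eventually.of_forall fun t ht => ?_
    have ht0 : (0:ℝ) < t := ht
    have hev : ∀ᶠ p : ℂ in l, t ≤ S p := tendsto_sfun.eventually_ge_atTop t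
    -- factor 2 (real part)
    have htends : Tendsto (fun p : ℂ => t / S p) l (nhdsWithin 0 (Ioi 0)) := by
      apply tendsto_nhdsWithin_of_tendsto_nhds_of_eventually_within
      · have := tendsto_sfun.inv_tendsto_atTop.const_mul t
        simpa [div_eq_mul_inv] using this
      · filter_upwards [hspos] with p hp
        exact div_pos ht0 hp
    have hreal : Tendsto (fun p : ℂ => S p ^ lam * μ (t / S p)) l (nhds (a * t ^ lam)) := by
      have hm := (hasymp.comp htends).mul_const (a * t ^ lam)
      rw [one_mul] at hm
      apply hm.congr'
      filter_upwards [hspos] with p hp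
      simp only [Function.comp]
      rw [Real.div_rpow ht0.le hp.le]
      have h1 : t ^ lam ≠ 0 := (Real.rpow_pos_of_pos ht0 lam).ne'
      have h2 : S p ^ lam ≠ 0 := (Real.rpow_pos_of_pos hp lam).ne'
      field_simp
    have hfac2 : Tendsto (fun p : ℂ => (((S p ^ lam * μ (t / S p) : ℝ)) : ℂ)) l
        (nhds (((a * t ^ lam : ℝ)) : ℂ)) :=
      (Complex.continuous_ofReal.tendsto _).comp hreal
    -- factor 1
    have hfac1 : Tendsto (fun p : ℂ => Complex.exp (-((t : ℂ) * W p))) l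
        (nhds (Complex.exp (-(t : ℂ)))) := by
      have h1 : Tendsto (fun p : ℂ => -((t : ℂ) * W p)) l (nhds (-((t : ℂ) * 1))) :=
        (tendsto_Ldiv.const_mul ((t : ℂ))).neg
      rw [mul_one] at h1
      exact (Complex.continuous_exp.tendsto _).comp h1
    have hprod := hfac1.mul hfac2
    have hlimeq : ((a * t ^ lam * Real.exp (-t) : ℝ) : ℂ)
        = Complex.exp (-(t : ℂ)) * ((a * t ^ lam : ℝ) : ℂ) := by
      rw [Complex.ofReal_mul, Complex.ofReal_exp, Complex.ofReal_neg]
      ring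
    rw [hlimeq]
    apply hprod.congr'
    filter_upwards [hspos, hev] with p hp hpt
    rw [Set.indicator_of_mem (show t ∈ Ioc (0:ℝ) (S p) from ⟨ht0, hpt⟩)]


end KfunAux

open KfunAux in
theorem Kfun_asymp_zero_power_weight (μ : ℝ → ℝ)
    (hc : ContinuousOn μ (Set.Icc 0 1))
    (a lam : ℝ) (ha : 0 < a) (hlam : 0 < lam)
    (hasymp : Tendsto (fun α : ℝ => μ α / (a * α ^ lam))
      (nhdsWithin 0 (Set.Ioi 0)) (nhds 1)) :
    Tendsto (fun p : ℂ => p * (-Complex.log p) ^ ((1 + lam : ℝ) : ℂ) * Kfun μ p)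
      (nhdsWithin 0 Complex.slitPlane)
      (nhds ((a * Real.Gamma (1 + lam) : ℝ) : ℂ)) := by
  obtain ⟨C, hC, hCb⟩ := mu_bound μ hc a lam ha hlam hasymp
  have hDCT := DCT_lemma μ hc a lam ha hlam hasymp C hC hCb tendsto_sfun tendsto_Ldiv
  have hspos : ∀ᶠ p : ℂ in nhdsWithin (0:ℂ) Complex.slitPlane, 0 < (-Complex.log p).re :=
    tendsto_sfun.eventually_gt_atTop 0
  have hW1 : Tendsto (fun p : ℂ =>
      ((-Complex.log p) / (((-Complex.log p).re : ℝ) : ℂ)) ^ ((1 + lam : ℝ) : ℂ))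
      (nhdsWithin 0 Complex.slitPlane) (nhds 1) := by
    have hcont : ContinuousAt (fun z : ℂ => z ^ ((1 + lam : ℝ) : ℂ)) 1 :=
      continuousAt_cpow_const (show (1:ℂ) ∈ Complex.slitPlane by simp [Complex.mem_slitPlane_iff])
    have := hcont.tendsto.comp tendsto_Ldiv
    simpa [Complex.one_cpow, Function.comp_def] using this
  have hmul := hW1.mul hDCT
  rw [one_mul] at hmul
  apply hmul.congr'
  filter_upwards [hspos, self_mem_nhdsWithin] with p hs hp
  exact (key_identity μ lam p hp hs).symm
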